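/- Let 1 < q < 2, L > 0, and let h, h̄ be nonnegative reals with h̄ ≤ L. If h > 3L, then the Taylor remainder satisfies (1/q)(h^q - h̄^q) - h̄^{q-1}(h-h̄) ≥ (q-1)·(1/2)^{2-q}·∫₀¹∫₀ˢ dλ ds · (h - h̄)^q = ((q-1)/2)·(1/2)^{2-q}·(h-h̄)^q. Moreover if h ≤ 3L, then the remainder is ≥ ((q-1)/2)·(3L)^{q-2}·(h-h̄)². -/

import Mathlib

open Real

open Set in
/-- Strong convexity estimate for `t ↦ t^q/q` on `[0, M]`. -/
lemma key_strong_convex (q M a b : ℝ) (hq1 : 1 < q) (hq2 : q < 2) (hM : 0 < M)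
    (ha : 0 ≤ a) (haM : a ≤ M) (hb : 0 ≤ b) (hbM : b ≤ M) :
    (1 / q) * (a ^ q - b ^ q) - b ^ (q - 1) * (a - b)
      ≥ ((q - 1) / 2) * M ^ (q - 2) * (a - b) ^ 2 := by
  have hq0 : (0:ℝ) < q := by linarith
  set c : ℝ := (q - 1) * M ^ (q - 2) with hc
  have hcpos : 0 < c := by
    apply mul_pos (by linarith)
    exact rpow_pos_of_pos hM _
  set g : ℝ → ℝ := fun t => t ^ q / q - c / 2 * t ^ 2 with hg
  have hg' : ∀ x : ℝ, HasDerivAt g (x ^ (q - 1) - c * x) x := by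
    intro x
    have h1 : HasDerivAt (fun t : ℝ => t ^ q) (q * x ^ (q - 1)) x :=
      Real.hasDerivAt_rpow_const (Or.inr hq1.le)
    have h2 : HasDerivAt (fun t : ℝ => t ^ q / q) (x ^ (q - 1)) x := by
      have := h1.div_const q
      refine this.congr_deriv ?_
      field_simp
    have h3 : HasDerivAt (fun t : ℝ => c / 2 * t ^ 2) (c * x) x := by
      have : HasDerivAt (fun t : ℝ => t ^ 2) (2 * x) x := by
        simpa using (hasDerivAt_pow 2 x)
      have := this.const_mul (c / 2)
      refine this.congr_deriv ?_
      ring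
    exact h2.sub h3
  have hconv : ConvexOn ℝ (Icc 0 M) g := by
    apply convexOn_of_hasDerivWithinAt2_nonneg (convex_Icc 0 M)
      (f' := fun x => x ^ (q - 1) - c * x)
      (f'' := fun x => (q - 1) * x ^ (q - 2) - c)
    · exact fun x _ => ((hg' x).differentiableAt.continuousAt).continuousWithinAt
    · exact fun x _ => (hg' x).hasDerivWithinAt
    · intro x hx
      rw [interior_Icc] at hx
      have hx0 : x ≠ 0 := ne_of_gt hx.1
      have h1 : HasDerivAt (fun t : ℝ => t ^ (q - 1)) ((q - 1) * x ^ (q - 1 - 1)) x :=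
        Real.hasDerivAt_rpow_const (Or.inl hx0)
      have h2 : HasDerivAt (fun t : ℝ => c * t) c x := by
        simpa using (hasDerivAt_id x).const_mul c
      have := h1.sub h2
      have he : q - 1 - 1 = q - 2 := by ring
      rw [he] at this
      exact this.hasDerivWithinAt
    · intro x hx
      rw [interior_Icc] at hx
      have : M ^ (q - 2) ≤ x ^ (q - 2) :=
        rpow_le_rpow_of_nonpos hx.1 hx.2.le (by linarith)
      have := mul_le_mul_of_nonneg_left this (by linarith : (0:ℝ) ≤ q - 1)
      simp only [hc]
      linarith
  have hgb' := hg' b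
  have key : g a ≥ g b + (b ^ (q - 1) - c * b) * (a - b) := by
    rcases lt_trichotomy a b with hab | hab | hab
    · have hs := hconv.slope_le_of_hasDerivAt ⟨ha, haM⟩ ⟨hb, hbM⟩ hab hgb'
      rw [slope_def_field] at hs
      have hba : (0:ℝ) < b - a := by linarith
      have := (div_le_iff₀ hba).mp hs
      nlinarith [this]
    · simp [hab]
    · have hs := hconv.le_slope_of_hasDerivAt ⟨hb, hbM⟩ ⟨ha, haM⟩ hab hgb'
      rw [slope_def_field] at hs
      have hba : (0:ℝ) < a - b := by linarith
      have := (le_div_iff₀ hba).mp hs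
      nlinarith [this]
  have hexp : (1:ℝ)/q * (a ^ q - b ^ q) = a ^ q / q - b ^ q / q := by ring
  simp only [hg] at key
  rw [hexp]
  nlinarith [key]


/-- Lower bounds on the Taylor remainder of `t ↦ t^q/q`, `1 < q < 2`, at `h̄ ≤ L`,
split according to whether `h > 3L` or `h ≤ 3L`. -/
theorem stmt_4 (q L h hb : ℝ) (hq1 : 1 < q) (hq2 : q < 2) (hL : 0 < L)
    (hh : 0 ≤ h) (hhb : 0 ≤ hb) (hbL : hb ≤ L) :
    (h > 3 * L →
      (1 / q) * (h ^ q - hb ^ q) - hb ^ (q - 1) * (h - hb)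
        ≥ ((q - 1) / 2) * (1 / 2 : ℝ) ^ (2 - q) * (h - hb) ^ q) ∧
    (h ≤ 3 * L →
      (1 / q) * (h ^ q - hb ^ q) - hb ^ (q - 1) * (h - hb)
        ≥ ((q - 1) / 2) * (3 * L) ^ (q - 2) * (h - hb) ^ 2) := by
  
  constructor
  · intro h3L
    have hhpos : 0 < h := by linarith
    have hbh : hb ≤ h := by linarith
    have hmain := key_strong_convex q h h hb hq1 hq2 hhpos hh le_rfl hhb hbh
    set d : ℝ := h - hb with hd
    have hdpos : 0 < d := by
      have : hb < h := by linarith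
      simpa [hd] using sub_pos.mpr this
    have hh2d : h ≤ 2 * d := by simp only [hd]; linarith
    -- h^(q-2) ≥ (2d)^(q-2)
    have h1 : (2 * d) ^ (q - 2) ≤ h ^ (q - 2) :=
      rpow_le_rpow_of_nonpos hhpos hh2d (by linarith)
    have h2 : (2 * d) ^ (q - 2) = (2:ℝ) ^ (q - 2) * d ^ (q - 2) :=
      mul_rpow (by norm_num) hdpos.le
    have h3 : ((1:ℝ)/2) ^ (2 - q) = (2:ℝ) ^ (q - 2) := by
      rw [one_div, Real.inv_rpow (by norm_num : (0:ℝ) ≤ 2), ← Real.rpow_neg (by norm_num : (0:ℝ) ≤ 2)]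
      norm_num
    have h4 : d ^ (q - 2) * d ^ (2:ℕ) = d ^ q := by
      rw [← rpow_natCast d 2, ← rpow_add hdpos]
      norm_num
    have h6 : (2:ℝ) ^ (q - 2) * d ^ (q - 2) ≤ h ^ (q - 2) := h2 ▸ h1
    have h7 : (q - 1) / 2 * ((2:ℝ) ^ (q - 2) * d ^ (q - 2)) * d ^ 2
        ≤ (q - 1) / 2 * h ^ (q - 2) * d ^ 2 := by
      apply mul_le_mul_of_nonneg_right
        (mul_le_mul_of_nonneg_left h6 (by linarith)) (by positivity)
    have h8 : (q - 1) / 2 * ((2:ℝ) ^ (q - 2) * d ^ (q - 2)) * d ^ 2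
        = (q - 1) / 2 * ((1:ℝ)/2) ^ (2 - q) * d ^ q := by
      rw [h3, ← h4]; ring
    linarith [hmain, h7, h8]
  · intro h3L
    have h3Lpos : 0 < 3 * L := by linarith
    exact key_strong_convex q (3 * L) h hb hq1 hq2 h3Lpos hh h3L hhb (by linarith)
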